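/- For PathNim PN(3,2) (three stacks on a path; a move removes at least one token total from stacks {1,2} or from stacks {2,3}), the set of P-positions is exactly {(a, 0, a) : a ≥ 0}. -/
import Mathlib


/-- A legal move in SetNim: at least one stack strictly decreases, all changed
stacks lie in some allowed move set, stacks weakly decrease. -/
def Move {V : Type} (A : Set (Set V)) (p q : V → ℕ) : Prop :=
  q ≠ p ∧ (∀ i, q i ≤ p i) ∧ ∃ a ∈ A, ∀ i, q i ≠ p i → i ∈ a

/-- P-positions: positions all of whose options are N-positions. -/
def PPos {V : Type} [Fintype V] (A : Set (Set V)) (p : V → ℕ) : Prop :=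
  ∀ q, Move A p q → ¬ PPos A q
termination_by Finset.univ.sum p
decreasing_by
  rename_i hq
  obtain ⟨hne, hle, -⟩ := hq
  refine Finset.sum_lt_sum (fun i _ => hle i) ?_
  obtain ⟨i, hi⟩ := Function.ne_iff.mp hne
  exact ⟨i, Finset.mem_univ i, lt_of_le_of_ne (hle i) hi⟩

/-- Move sets of PathNim PN(3,2). -/
def PN32 : Set (Set (Fin 3)) := {{0, 1}, {1, 2}}

lemma sum_lt_of_move {p q : Fin 3 → ℕ} (h : Move PN32 p q) :
    Finset.univ.sum q < Finset.univ.sum p := by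
  obtain ⟨hne, hle, -⟩ := h
  refine Finset.sum_lt_sum (fun i _ => hle i) ?_
  obtain ⟨i, hi⟩ := Function.ne_iff.mp hne
  exact ⟨i, Finset.mem_univ i, lt_of_le_of_ne (hle i) hi⟩

lemma ppos_iff (n : ℕ) : ∀ p : Fin 3 → ℕ, Finset.univ.sum p = n →
    (PPos PN32 p ↔ p 1 = 0 ∧ p 0 = p 2) := by
  induction n using Nat.strong_induction_on with
  | _ n IH =>
  intro p hn
  constructor
  · intro hP
    by_contra hform
    rw [PPos] at hP
    rcases le_or_gt (p 0) (p 2) with h | h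
    · -- move on {1,2} to (p 0, 0, p 0)
      set q : Fin 3 → ℕ := ![p 0, 0, p 0] with hqdef
      have hne : q ≠ p := by
        intro he
        exact hform ⟨by rw [← he]; rfl, by rw [show p 2 = q 2 from (he ▸ rfl : q 2 = p 2).symm]; rfl⟩
      have hmove : Move PN32 p q := by
        refine ⟨hne, ?_, ⟨{1, 2}, Or.inr rfl, ?_⟩⟩
        · intro i
          fin_cases i <;> simp [q] <;> omega
        · intro i hi
          fin_cases i
          · exact absurd rfl hi
          · simp
          · simp
      have hq : PPos PN32 q := by
        rw [IH _ (hn ▸ sum_lt_of_move hmove) q rfl]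
        exact ⟨rfl, rfl⟩
      exact hP q hmove hq
    · -- move on {0,1} to (p 2, 0, p 2)
      set q : Fin 3 → ℕ := ![p 2, 0, p 2] with hqdef
      have hne : q ≠ p := by
        intro he
        have : q 0 = p 0 := by rw [he]
        have h2 : q 0 = p 2 := rfl
        omega
      have hmove : Move PN32 p q := by
        refine ⟨hne, ?_, ⟨{0, 1}, Or.inl rfl, ?_⟩⟩
        · intro i
          fin_cases i <;> simp [q] <;> omega
        · intro i hi
          fin_cases i
          · simp
          · simp
          · exact absurd rfl hi
      have hq : PPos PN32 q := by
        rw [IH _ (hn ▸ sum_lt_of_move hmove) q rfl]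
        exact ⟨rfl, rfl⟩
      exact hP q hmove hq
  · rintro ⟨h1, h02⟩
    rw [PPos]
    intro q hm hq
    obtain ⟨hne, hle, a, ha, hch⟩ := hm
    have hq1 : q 1 = 0 := by have := hle 1; omega
    rw [IH _ (hn ▸ sum_lt_of_move ⟨hne, hle, a, ha, hch⟩) q rfl] at hq
    obtain ⟨-, hq02⟩ := hq
    rcases ha with rfl | rfl
    · -- a = {0,1}: q 2 = p 2
      have h2 : q 2 = p 2 := by
        by_contra hc
        have := hch 2 hc
        simp [Fin.ext_iff] at this
      have h0 : q 0 ≠ p 0 := by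
        intro h0
        apply hne
        funext i
        fin_cases i
        · exact h0
        · show q 1 = p 1; omega
        · exact h2
      have := hle 0
      omega
    · -- a = {1,2}: q 0 = p 0
      have h0 : q 0 = p 0 := by
        by_contra hc
        have := hch 0 hc
        simp [Fin.ext_iff] at this
      have h2 : q 2 ≠ p 2 := by
        intro h2
        apply hne
        funext i
        fin_cases i
        · exact h0
        · show q 1 = p 1; omega
        · exact h2
      have := hle 2
      omega

/-- the P-positions of PN(3,2) are exactly the positions (a,0,a). -/
theorem pn32_ppos (p : Fin 3 → ℕ) :
    PPos PN32 p ↔ ∃ a : ℕ, p = ![a, 0, a] := by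
  rw [ppos_iff (Finset.univ.sum p) p rfl]
  constructor
  · rintro ⟨h1, h02⟩
    refine ⟨p 0, ?_⟩
    funext i
    fin_cases i
    · rfl
    · exact h1
    · exact h02.symm
  · rintro ⟨a, rfl⟩
    exact ⟨rfl, rfl⟩
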